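/- arXiv:2003.07537 — 2 statements merged into one kernel-verified Lean document; each statement's English description precedes it below -/
import Mathlib

section
/- Let Z have CDF P_Z(z) = 1 − (1 − z^{N−1})^{2^B} on [0,1] (so density p_Z(z) = (N−1) Σ_{m=1}^{2^B} C(2^B,m)(−1)^{m−1} m z^{m(N−1)−1}), and let G be independent with CDF P_G(g) = 1 − (1−g)^{N−2} on [0,1], where N ≥ 3, B ≥ 0 are integers. Then V = Z·G has CDF P_V(v) = 1 + (N−1) Σ_{n=0}^{N−2} Σ_{m=1}^{2^B} C(N−2,n) C(2^B,m) (−1)^{n+m} m (v^n − v^{m(N−1)}) / (mN − (m+n)) for v ∈ [0,1]. -/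
open MeasureTheory ProbabilityTheory Finset

noncomputable def pZ (N K : ℕ) (z : ℝ) : ℝ :=
  ((N:ℝ) - 1) * ∑ m ∈ Finset.Icc 1 K,
    (K.choose m : ℝ) * (-1:ℝ)^(m-1) * m * z^(m*(N-1)-1)

noncomputable def FZ (N K : ℕ) (z : ℝ) : ℝ := 1 - (1 - z^(N-1))^K

lemma sum_range_succ_eq_Icc (K : ℕ) (f : ℕ → ℝ) :
    ∑ m ∈ Finset.range (K+1), f m = f 0 + ∑ m ∈ Finset.Icc 1 K, f m := by
  rw [Finset.range_eq_Ico, Finset.sum_eq_sum_Ico_succ_bot (Nat.succ_pos K),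
    ← Finset.Ico_add_one_right_eq_Icc]
  rfl

lemma FZ_eq (N K : ℕ) (z : ℝ) :
    FZ N K z = -∑ m ∈ Finset.Icc 1 K, (K.choose m : ℝ) * (-1:ℝ)^m * z^(m*(N-1)) := by
  have hb : ((1:ℝ) - z^(N-1))^K
      = ∑ m ∈ Finset.range (K+1), (K.choose m : ℝ) * (-1:ℝ)^m * z^(m*(N-1)) := by
    have := add_pow (-z^(N-1)) 1 K
    simp only [one_pow, mul_one] at this
    rw [show (1:ℝ) - z^(N-1) = -z^(N-1) + 1 by ring, this]
    refine Finset.sum_congr rfl fun m _ => ?_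
    rw [neg_pow, ← pow_mul]
    ring
  rw [FZ, hb, sum_range_succ_eq_Icc]
  simp

lemma hasDerivAt_FZ (N K : ℕ) (hN : 3 ≤ N) (z : ℝ) : HasDerivAt (FZ N K) (pZ N K z) z := by
  have h : HasDerivAt (fun z : ℝ =>
      -∑ m ∈ Finset.Icc 1 K, (K.choose m : ℝ) * (-1:ℝ)^m * z^(m*(N-1)))
      (pZ N K z) z := by
    have hterm : ∀ m ∈ Finset.Icc 1 K, HasDerivAt
        (fun z : ℝ => (K.choose m : ℝ) * (-1:ℝ)^m * z^(m*(N-1)))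
        ((K.choose m : ℝ) * (-1:ℝ)^m * ((m*(N-1) : ℕ) * z^(m*(N-1)-1))) z :=
      fun m _ => (hasDerivAt_pow (m*(N-1)) z).const_mul _
    have : HasDerivAt (fun z : ℝ =>
        -∑ m ∈ Finset.Icc 1 K, (K.choose m : ℝ) * (-1:ℝ)^m * z^(m*(N-1)))
        (-∑ m ∈ Finset.Icc 1 K, (K.choose m : ℝ) * (-1:ℝ)^m * ((m*(N-1) : ℕ) * z^(m*(N-1)-1))) z :=
      (HasDerivAt.fun_sum hterm).fun_neg
    convert this using 1
    rw [pZ, Finset.mul_sum, ← Finset.sum_neg_distrib]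
    refine Finset.sum_congr rfl fun m hm => ?_
    obtain ⟨hm1, _⟩ := Finset.mem_Icc.mp hm
    have hm' : m - 1 + 1 = m := Nat.succ_pred_eq_of_pos hm1
    rw [Nat.cast_mul, Nat.cast_sub (by omega : 1 ≤ N), Nat.cast_one,
      ← hm', pow_succ]
    push_cast
    ring
  have heq : FZ N K = fun z =>
      -∑ m ∈ Finset.Icc 1 K, (K.choose m : ℝ) * (-1:ℝ)^m * z^(m*(N-1)) :=
    funext fun z => FZ_eq N K z
  rw [heq]; exact h

lemma pZ_eq_prod (N K : ℕ) (hN : 3 ≤ N) (z : ℝ) :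
    pZ N K z = (K:ℝ) * ((N:ℝ)-1) * z^(N-2) * (1 - z^(N-1))^(K-1) := by
  have h1 : HasDerivAt (FZ N K)
      ((K:ℝ) * ((N:ℝ)-1) * z^(N-2) * (1 - z^(N-1))^(K-1)) z := by
    have hu : HasDerivAt (fun z : ℝ => 1 - z^(N-1))
        (-(((N-1:ℕ):ℝ) * z^(N-1-1))) z := (hasDerivAt_pow (N-1) z).const_sub 1
    have := hu.pow K
    have h2 : HasDerivAt (fun z : ℝ => 1 - (1 - z^(N-1))^K)
        (-((K:ℝ) * (1 - z^(N-1))^(K-1) * (-(((N-1:ℕ):ℝ) * z^(N-1-1))))) z :=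
      this.const_sub 1
    convert h2 using 1
    · rfl
    have h3 : N - 1 - 1 = N - 2 := by omega
    rw [h3, Nat.cast_sub (by omega : 1 ≤ N), Nat.cast_one]
    ring
  exact (hasDerivAt_FZ N K hN z).unique h1

lemma pZ_continuous (N K : ℕ) : Continuous (pZ N K) := by
  unfold pZ; fun_prop

lemma pZ_nonneg (N K : ℕ) {z : ℝ} (h0 : 0 ≤ z) (h1 : z ≤ 1) (hN : 3 ≤ N) :
    0 ≤ pZ N K z := by
  rw [pZ_eq_prod N K hN]
  have h2 : z ^ (N-1) ≤ 1 := pow_le_one₀ h0 h1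
  have hNc : (0:ℝ) ≤ (N:ℝ) - 1 := by
    have : (3:ℝ) ≤ N := by exact_mod_cast hN
    linarith
  exact mul_nonneg (mul_nonneg (mul_nonneg (Nat.cast_nonneg K) hNc)
    (pow_nonneg h0 _)) (pow_nonneg (by linarith) _)

lemma integral_pZ (N K : ℕ) (hN : 3 ≤ N) (a b : ℝ) :
    ∫ z in a..b, pZ N K z = FZ N K b - FZ N K a :=
  intervalIntegral.integral_eq_sub_of_hasDerivAt
    (fun z _ => hasDerivAt_FZ N K hN z)
    ((pZ_continuous N K).intervalIntegrable a b)

lemma FZ_zero (N K : ℕ) (hN : 3 ≤ N) : FZ N K 0 = 0 := by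
  rw [FZ, zero_pow (by omega)]; simp

lemma FZ_one (N K : ℕ) (hK : 1 ≤ K) : FZ N K 1 = 1 := by
  rw [FZ, one_pow]; simp [zero_pow (by omega : K ≠ 0)]
lemma cdf_clamp {Ω : Type*} [MeasurableSpace Ω] (μ : Measure Ω) [IsProbabilityMeasure μ]
    (X : Ω → ℝ) (hrange : ∀ᵐ ω ∂μ, X ω ∈ Set.Icc (0:ℝ) 1) (F : ℝ → ℝ)
    (hF : ∀ x ∈ Set.Icc (0:ℝ) 1, μ {ω | X ω ≤ x} = ENNReal.ofReal (F x))
    (hF0 : F 0 = 0) (hF1 : F 1 = 1) (x : ℝ) :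
    μ {ω | X ω ≤ x} = ENNReal.ofReal (F (max 0 (min x 1))) := by
  have hnull : μ {ω | ¬ X ω ∈ Set.Icc (0:ℝ) 1} = 0 := by
    simpa [ae_iff] using hrange
  rcases lt_or_ge x 0 with hx | hx
  · have hclamp : max 0 (min x 1) = 0 := by
      rw [min_eq_left (by linarith), max_eq_left hx.le]
    rw [hclamp, hF0, ENNReal.ofReal_zero]
    refine measure_mono_null ?_ hnull
    intro ω hω
    simp only [Set.mem_setOf_eq, Set.mem_Icc] at *
    intro h; linarith [h.1]
  · rcases le_or_gt x 1 with hx1 | hx1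
    · rw [max_eq_right (le_min hx (by linarith)), min_eq_left hx1]
      exact hF x ⟨hx, hx1⟩
    · have hclamp : max 0 (min x 1) = 1 := by
        rw [min_eq_right hx1.le, max_eq_right zero_le_one]
      rw [hclamp, hF1, ENNReal.ofReal_one]
      refine le_antisymm prob_le_one ?_
      calc (1:ENNReal) = μ {ω | X ω ≤ 1} := by
            rw [hF 1 ⟨zero_le_one, le_refl 1⟩, hF1, ENNReal.ofReal_one]
        _ ≤ μ {ω | X ω ≤ x} := measure_mono fun ω hω => le_trans hω hx1.le

noncomputable def densZ (N K : ℕ) : ℝ → ENNReal :=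
  fun z => Set.indicator (Set.Ioc (0:ℝ) 1) (fun z => ENNReal.ofReal (pZ N K z)) z

lemma densZ_measurable (N K : ℕ) : Measurable (densZ N K) :=
  Measurable.indicator (ENNReal.measurable_ofReal.comp (pZ_continuous N K).measurable)
    measurableSet_Ioc

lemma lintegral_densZ (N K : ℕ) (hN : 3 ≤ N) {x : ℝ} (h0 : 0 < x) (h1 : x ≤ 1) :
    ∫⁻ z in Set.Ioc 0 x, ENNReal.ofReal (pZ N K z) = ENNReal.ofReal (FZ N K x) := by
  rw [← ofReal_integral_eq_lintegral_ofReal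
    ((pZ_continuous N K).integrableOn_Ioc)
    ((ae_restrict_iff' measurableSet_Ioc).mpr (ae_of_all _ fun z hz =>
      pZ_nonneg N K hz.1.le (le_trans hz.2 h1) hN))]
  rw [← intervalIntegral.integral_of_le h0.le, integral_pZ N K hN, FZ_zero N K hN, sub_zero]

lemma mapZ_eq {Ω : Type*} [MeasurableSpace Ω] (μ : Measure Ω) [IsProbabilityMeasure μ]
    (N K : ℕ) (hN : 3 ≤ N) (hK : 1 ≤ K) (Z : Ω → ℝ) (hZmeas : Measurable Z)
    (hZrange : ∀ᵐ ω ∂μ, Z ω ∈ Set.Icc (0:ℝ) 1)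
    (hZcdf : ∀ z ∈ Set.Icc (0:ℝ) 1, μ {ω | Z ω ≤ z} = ENNReal.ofReal (FZ N K z)) :
    μ.map Z = volume.withDensity (densZ N K) := by
  haveI : IsProbabilityMeasure (μ.map Z) := Measure.isProbabilityMeasure_map hZmeas.aemeasurable
  refine Measure.ext_of_Iic _ _ fun x => ?_
  rw [Measure.map_apply hZmeas measurableSet_Iic]
  have hL : μ (Z ⁻¹' Set.Iic x) = ENNReal.ofReal (FZ N K (max 0 (min x 1))) :=
    cdf_clamp μ Z hZrange (FZ N K) hZcdf (FZ_zero N K hN) (FZ_one N K hK) x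
  rw [hL, withDensity_apply _ measurableSet_Iic]
  unfold densZ
  rw [lintegral_indicator measurableSet_Ioc, Measure.restrict_restrict measurableSet_Ioc]
  rcases le_or_gt x 0 with hx | hx
  · have hset : Set.Ioc (0:ℝ) 1 ∩ Set.Iic x = ∅ := by
      ext z
      simp only [Set.mem_inter_iff, Set.mem_Ioc, Set.mem_Iic, Set.mem_empty_iff_false,
        iff_false, not_and, and_imp]
      intro h1 _ ; linarith
    rw [hset, Measure.restrict_empty, lintegral_zero_measure]
    rw [min_eq_left (by linarith), max_eq_left hx, FZ_zero N K hN, ENNReal.ofReal_zero]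
  · rcases le_or_gt x 1 with hx1 | hx1
    · have hset : Set.Ioc (0:ℝ) 1 ∩ Set.Iic x = Set.Ioc 0 x := by
        ext z
        simp only [Set.mem_inter_iff, Set.mem_Ioc, Set.mem_Iic]
        constructor
        · rintro ⟨⟨h1, _⟩, h3⟩; exact ⟨h1, h3⟩
        · rintro ⟨h1, h2⟩; exact ⟨⟨h1, le_trans h2 hx1⟩, h2⟩
      rw [hset, lintegral_densZ N K hN hx hx1,
        max_eq_right (le_min hx.le (by linarith)), min_eq_left hx1]
    · have hset : Set.Ioc (0:ℝ) 1 ∩ Set.Iic x = Set.Ioc 0 1 := by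
        ext z
        simp only [Set.mem_inter_iff, Set.mem_Ioc, Set.mem_Iic]
        constructor
        · rintro ⟨⟨h1, h2⟩, _⟩; exact ⟨h1, h2⟩
        · rintro ⟨h1, h2⟩; exact ⟨⟨h1, h2⟩, le_trans h2 hx1.le⟩
      rw [hset, lintegral_densZ N K hN one_pos (le_refl 1),
        min_eq_right hx1.le, max_eq_right zero_le_one]
lemma vz_binom (N : ℕ) (hN : 3 ≤ N) (w : ℝ) :
    ((1:ℝ) - w)^(N-2) = ∑ n ∈ Finset.range (N-1), ((N-2).choose n : ℝ) * (-1:ℝ)^n * w^n := by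
  have := add_pow (-w) 1 (N-2)
  simp only [one_pow, mul_one] at this
  rw [show (1:ℝ) - w = -w + 1 by ring, this, show N-2+1 = N-1 by omega]
  refine Finset.sum_congr rfl fun n _ => ?_
  rw [neg_pow]
  ring

lemma J_intable (N K m n : ℕ) (v : ℝ) (hv0 : 0 ≤ v) (hv1 : v ≤ 1) :
    IntervalIntegrable (fun z : ℝ => z^(m*(N-1)-1) * (v/z)^n) volume v 1 := by
  rcases eq_or_lt_of_le hv0 with hv | hv
  · have heq : (fun z : ℝ => z^(m*(N-1)-1) * (v/z)^n)
        = fun z : ℝ => z^(m*(N-1)-1) * (0:ℝ)^n := by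
      funext z; rw [← hv, zero_div]
    rw [heq]
    exact ((continuous_pow _).mul continuous_const).intervalIntegrable v 1
  · apply ContinuousOn.intervalIntegrable
    have huIcc : Set.uIcc v 1 = Set.Icc v 1 := Set.uIcc_of_le hv1
    refine ContinuousOn.mul ((continuous_pow _).continuousOn) (ContinuousOn.pow ?_ n)
    refine ContinuousOn.div continuousOn_const continuousOn_id fun z hz => ?_
    rw [huIcc] at hz
    exact ne_of_gt (lt_of_lt_of_le hv hz.1)

lemma J_eval (N K m n : ℕ) (hN : 3 ≤ N) (hm : 1 ≤ m) (hn : n ≤ N-2) (v : ℝ)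
    (hv0 : 0 ≤ v) (hv1 : v ≤ 1) :
    ∫ z in v..1, z^(m*(N-1)-1) * (v/z)^n
      = (v^n - v^(m*(N-1))) / ((m*(N-1)-n : ℕ) : ℝ) := by
  have hge : N-1 ≤ m*(N-1) := Nat.le_mul_of_pos_left _ hm
  rcases eq_or_lt_of_le hv0 with hv | hv
  · rcases Nat.eq_zero_or_pos n with hn0 | hn0
    · subst hn0
      simp only [pow_zero, mul_one, Nat.sub_zero]
      rw [integral_pow, ← hv,
        zero_pow (by omega : m*(N-1)-1+1 ≠ 0), one_pow,
        zero_pow (by omega : m*(N-1) ≠ 0)]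
      rw [show ((m*(N-1)-1 : ℕ):ℝ) + 1 = ((m*(N-1) : ℕ):ℝ) by
        rw [← Nat.cast_add_one]; congr 1; omega]
    · have heq : Set.EqOn (fun z : ℝ => z^(m*(N-1)-1) * (v/z)^n) (fun _ : ℝ => (0:ℝ))
          (Set.uIcc v 1) := by
        intro z _
        simp only [← hv, zero_div, zero_pow (by omega : n ≠ 0), mul_zero]
      rw [intervalIntegral.integral_congr heq, intervalIntegral.integral_const, smul_zero,
        ← hv, zero_pow (by omega : n ≠ 0), zero_pow (by omega : m*(N-1) ≠ 0)]
      norm_num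
  · have heq : Set.EqOn (fun z : ℝ => z^(m*(N-1)-1) * (v/z)^n)
        (fun z : ℝ => v^n * z^(m*(N-1)-1-n)) (Set.uIcc v 1) := by
      intro z hz
      rw [Set.uIcc_of_le hv1] at hz
      have hz0 : z ≠ 0 := ne_of_gt (lt_of_lt_of_le hv hz.1)
      simp only [div_pow]
      rw [show m*(N-1)-1 = (m*(N-1)-1-n) + n by omega, pow_add, Nat.add_sub_cancel]
      field_simp
    rw [intervalIntegral.integral_congr heq, intervalIntegral.integral_const_mul,
      integral_pow, one_pow]
    have hc : ((m*(N-1)-1-n : ℕ) : ℝ) + 1 = ((m*(N-1)-n : ℕ) : ℝ) := by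
      rw [← Nat.cast_add_one]
      congr 1
      omega
    rw [hc, ← mul_div_assoc]
    congr 1
    rw [mul_sub, mul_one, ← pow_add, show n + (m*(N-1)-1-n+1) = m*(N-1) by omega]

lemma pZmul_expand (N K : ℕ) (n : ℕ) (v : ℝ) :
    (fun z : ℝ => pZ N K z * (v/z)^n)
      = fun z : ℝ => ∑ m ∈ Finset.Icc 1 K,
          (((N:ℝ)-1) * ((K.choose m : ℝ) * (-1:ℝ)^(m-1) * m))
            * (z^(m*(N-1)-1) * (v/z)^n) := by
  funext z
  rw [pZ, Finset.mul_sum, Finset.sum_mul]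
  exact Finset.sum_congr rfl fun m _ => by ring

lemma pZmul_intable (N K : ℕ) (n : ℕ) (v : ℝ) (hv0 : 0 ≤ v) (hv1 : v ≤ 1) :
    IntervalIntegrable (fun z : ℝ => pZ N K z * (v/z)^n) volume v 1 := by
  rw [pZmul_expand]
  have h := IntervalIntegrable.sum (Finset.Icc 1 K)
    (f := fun m => fun z : ℝ => (((N:ℝ)-1) * ((K.choose m : ℝ) * (-1:ℝ)^(m-1) * m))
      * (z^(m*(N-1)-1) * (v/z)^n))
    (fun m _ => (J_intable N K m n v hv0 hv1).const_mul _)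
  have h2 : (∑ m ∈ Finset.Icc 1 K, fun z : ℝ =>
      (((N:ℝ)-1) * ((K.choose m : ℝ) * (-1:ℝ)^(m-1) * m)) * (z^(m*(N-1)-1) * (v/z)^n))
      = fun z : ℝ => ∑ m ∈ Finset.Icc 1 K,
      (((N:ℝ)-1) * ((K.choose m : ℝ) * (-1:ℝ)^(m-1) * m)) * (z^(m*(N-1)-1) * (v/z)^n) := by
    funext z; simp
  rwa [h2] at h

lemma bin_expand (N K : ℕ) (hN : 3 ≤ N) (v : ℝ) :
    (fun z : ℝ => pZ N K z * (1 - v/z)^(N-2))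
      = fun z : ℝ => ∑ n ∈ Finset.range (N-1),
          (((N-2).choose n : ℝ) * (-1:ℝ)^n) * (pZ N K z * (v/z)^n) := by
  funext z
  rw [vz_binom N hN (v/z), Finset.mul_sum]
  exact Finset.sum_congr rfl fun n _ => by ring

lemma bin_intable (N K : ℕ) (hN : 3 ≤ N) (v : ℝ) (hv0 : 0 ≤ v) (hv1 : v ≤ 1) :
    IntervalIntegrable (fun z : ℝ => pZ N K z * (1 - v/z)^(N-2)) volume v 1 := by
  rw [bin_expand N K hN]
  have h := IntervalIntegrable.sum (Finset.range (N-1))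
    (f := fun n => fun z : ℝ => (((N-2).choose n : ℝ) * (-1:ℝ)^n) * (pZ N K z * (v/z)^n))
    (fun n _ => (pZmul_intable N K n v hv0 hv1).const_mul _)
  have h2 : (∑ n ∈ Finset.range (N-1), fun z : ℝ =>
      (((N-2).choose n : ℝ) * (-1:ℝ)^n) * (pZ N K z * (v/z)^n))
      = fun z : ℝ => ∑ n ∈ Finset.range (N-1),
      (((N-2).choose n : ℝ) * (-1:ℝ)^n) * (pZ N K z * (v/z)^n) := by
    funext z; simp
  rwa [h2] at h

lemma I_eval (N K : ℕ) (hN : 3 ≤ N) (v : ℝ) (hv0 : 0 ≤ v) (hv1 : v ≤ 1) :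
    ∫ z in v..1, pZ N K z * (1 - v/z)^(N-2)
      = ∑ n ∈ Finset.range (N-1), ∑ m ∈ Finset.Icc 1 K,
          (((N-2).choose n : ℝ) * (-1:ℝ)^n)
            * ((((N:ℝ)-1) * ((K.choose m : ℝ) * (-1:ℝ)^(m-1) * m))
              * ((v^n - v^(m*(N-1))) / ((m*(N-1)-n : ℕ) : ℝ))) := by
  rw [bin_expand N K hN]
  rw [intervalIntegral.integral_finset_sum
    (fun n _ => (pZmul_intable N K n v hv0 hv1).const_mul _)]
  refine Finset.sum_congr rfl fun n hn => ?_
  rw [intervalIntegral.integral_const_mul, pZmul_expand,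
    intervalIntegral.integral_finset_sum
      (fun m _ => (J_intable N K m n v hv0 hv1).const_mul _)]
  rw [Finset.mul_sum]
  refine Finset.sum_congr rfl fun m hm => ?_
  rw [intervalIntegral.integral_const_mul,
    J_eval N K m n hN (Finset.mem_Icc.mp hm).1 (by
      have := Finset.mem_range.mp hn; omega) v hv0 hv1]

lemma step3 (N K : ℕ) (hN : 3 ≤ N) (hK : 1 ≤ K) (v : ℝ) (hv0 : 0 ≤ v) (hv1 : v ≤ 1) :
    ∫ z in Set.Ioc (0:ℝ) 1, pZ N K z * (if z ≤ v then (1:ℝ) else 1 - (1-v/z)^(N-2))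
      = 1 + ((N:ℝ)-1) * ∑ n ∈ Finset.range (N-1), ∑ m ∈ Finset.Icc 1 K,
          ((N-2).choose n : ℝ) * (K.choose m : ℝ) * (-1:ℝ)^(n+m) * m
            * (v^n - v^(m*(N-1))) / ((m:ℝ)*(N:ℝ) - ((m:ℝ)+(n:ℝ))) := by
  set f : ℝ → ℝ := fun z => pZ N K z * (if z ≤ v then (1:ℝ) else 1 - (1-v/z)^(N-2)) with hf
  have hint1 : IntervalIntegrable f volume 0 v := by
    rw [intervalIntegrable_iff_integrableOn_Ioc_of_le hv0]
    refine IntegrableOn.congr_fun ((pZ_continuous N K).integrableOn_Ioc) ?_ measurableSet_Ioc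
    intro z hz
    rw [hf]
    simp only [if_pos hz.2, mul_one]
  have hint2 : IntervalIntegrable f volume v 1 := by
    rw [intervalIntegrable_iff_integrableOn_Ioc_of_le hv1]
    refine IntegrableOn.congr_fun
      (g := f)
      (f := fun z => pZ N K z - pZ N K z * (1-v/z)^(N-2)) ?_ ?_ measurableSet_Ioc
    · rw [← intervalIntegrable_iff_integrableOn_Ioc_of_le hv1]
      exact ((pZ_continuous N K).intervalIntegrable v 1).sub (bin_intable N K hN v hv0 hv1)
    · intro z hz
      rw [hf]
      simp only [if_neg (not_le.mpr hz.1)]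
      ring
  have hsplit : ∫ z in Set.Ioc (0:ℝ) 1, f z = (∫ z in (0:ℝ)..v, f z) + ∫ z in v..1, f z := by
    rw [← intervalIntegral.integral_of_le zero_le_one,
      intervalIntegral.integral_add_adjacent_intervals hint1 hint2]
  have hpart1 : ∫ z in (0:ℝ)..v, f z = FZ N K v := by
    have heq : Set.EqOn f (pZ N K) (Set.uIcc 0 v) := by
      intro z hz
      rw [Set.uIcc_of_le hv0] at hz
      rw [hf]
      simp only [if_pos hz.2, mul_one]
    rw [intervalIntegral.integral_congr heq, integral_pZ N K hN, FZ_zero N K hN, sub_zero]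
  have hpart2 : ∫ z in v..1, f z
      = (1 - FZ N K v) - ∫ z in v..1, pZ N K z * (1-v/z)^(N-2) := by
    have heq : ∀ᵐ z ∂(volume : Measure ℝ), z ∈ Set.uIoc v 1 →
        f z = pZ N K z - pZ N K z * (1-v/z)^(N-2) := by
      refine ae_of_all _ fun z hz => ?_
      rw [Set.uIoc_of_le hv1] at hz
      rw [hf]
      simp only [if_neg (not_le.mpr hz.1)]
      ring
    rw [intervalIntegral.integral_congr_ae heq,
      intervalIntegral.integral_sub ((pZ_continuous N K).intervalIntegrable v 1)
        (bin_intable N K hN v hv0 hv1),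
      integral_pZ N K hN, FZ_one N K hK]
  rw [hsplit, hpart1, hpart2, I_eval N K hN v hv0 hv1]
  have hkey : ∑ n ∈ Finset.range (N-1), ∑ m ∈ Finset.Icc 1 K,
      (((N-2).choose n : ℝ) * (-1:ℝ)^n)
        * ((((N:ℝ)-1) * ((K.choose m : ℝ) * (-1:ℝ)^(m-1) * m))
          * ((v^n - v^(m*(N-1))) / ((m*(N-1)-n : ℕ) : ℝ)))
      = -(((N:ℝ)-1) * ∑ n ∈ Finset.range (N-1), ∑ m ∈ Finset.Icc 1 K,
          ((N-2).choose n : ℝ) * (K.choose m : ℝ) * (-1:ℝ)^(n+m) * m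
            * (v^n - v^(m*(N-1))) / ((m:ℝ)*(N:ℝ) - ((m:ℝ)+(n:ℝ)))) := by
    rw [Finset.mul_sum, ← Finset.sum_neg_distrib]
    refine Finset.sum_congr rfl fun n hn => ?_
    rw [Finset.mul_sum, ← Finset.sum_neg_distrib]
    refine Finset.sum_congr rfl fun m hm => ?_
    obtain ⟨hm1, _⟩ := Finset.mem_Icc.mp hm
    have hn2 : n ≤ N - 2 := by have := Finset.mem_range.mp hn; omega
    have hge : N-1 ≤ m*(N-1) := Nat.le_mul_of_pos_left _ hm1
    have hden : ((m*(N-1)-n : ℕ) : ℝ) = (m:ℝ)*(N:ℝ) - ((m:ℝ)+(n:ℝ)) := by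
      rw [Nat.cast_sub (by omega), Nat.cast_mul, Nat.cast_sub (by omega), Nat.cast_one]
      ring
    rw [hden, pow_add ((-1:ℝ)) n m, ← Nat.succ_pred_eq_of_pos hm1, pow_succ]
    rw [Nat.succ_sub_one]
    ring
  rw [hkey]
  ring

/-- If `Z` has CDF `1 − (1 − z^(N−1))^(2^B)` on `[0,1]` and `G` is an independent
Beta(1, N−2) variable (CDF `1 − (1−g)^(N−2)` on `[0,1]`), then `V = Z·G` has the
closed-form CDF of Theorem 3. -/
theorem stmt5 {Ω : Type*} [MeasurableSpace Ω] (μ : Measure Ω) [IsProbabilityMeasure μ]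
    (N B : ℕ) (hN : 3 ≤ N) (Z G : Ω → ℝ)
    (hZmeas : Measurable Z) (hGmeas : Measurable G)
    (hZrange : ∀ᵐ ω ∂μ, Z ω ∈ Set.Icc (0 : ℝ) 1)
    (hGrange : ∀ᵐ ω ∂μ, G ω ∈ Set.Icc (0 : ℝ) 1)
    (hZcdf : ∀ z ∈ Set.Icc (0 : ℝ) 1,
      μ {ω | Z ω ≤ z} = ENNReal.ofReal (1 - (1 - z ^ (N - 1)) ^ (2 ^ B)))
    (hGcdf : ∀ g ∈ Set.Icc (0 : ℝ) 1,
      μ {ω | G ω ≤ g} = ENNReal.ofReal (1 - (1 - g) ^ (N - 2)))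
    (hindep : IndepFun Z G μ) :
    ∀ v ∈ Set.Icc (0 : ℝ) 1,
      μ {ω | Z ω * G ω ≤ v}
        = ENNReal.ofReal (1 + ((N : ℝ) - 1) *
            ∑ n ∈ Finset.range (N - 1), ∑ m ∈ Finset.Icc 1 (2 ^ B),
              ((N - 2).choose n : ℝ) * ((2 ^ B).choose m : ℝ) * (-1 : ℝ) ^ (n + m)
                * (m : ℝ) * (v ^ n - v ^ (m * (N - 1)))
                / ((m : ℝ) * (N : ℝ) - ((m : ℝ) + (n : ℝ)))) := by
  intro v hv
  obtain ⟨hv0, hv1⟩ := hv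
  set K := 2 ^ B with hKdef
  have hK : 1 ≤ K := Nat.one_le_two_pow
  haveI hνZ : IsProbabilityMeasure (μ.map Z) := Measure.isProbabilityMeasure_map hZmeas.aemeasurable
  haveI hνG : IsProbabilityMeasure (μ.map G) := Measure.isProbabilityMeasure_map hGmeas.aemeasurable
  have hs : MeasurableSet {p : ℝ × ℝ | p.1 * p.2 ≤ v} :=
    measurableSet_le (measurable_fst.mul measurable_snd) measurable_const
  have h1 : μ {ω | Z ω * G ω ≤ v}
      = ∫⁻ z, (μ.map G) {g | z * g ≤ v} ∂(μ.map Z) := by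
    rw [show {ω | Z ω * G ω ≤ v} = (fun ω => (Z ω, G ω)) ⁻¹' {p : ℝ × ℝ | p.1 * p.2 ≤ v}
        from rfl,
      ← Measure.map_apply (hZmeas.prodMk hGmeas) hs,
      (indepFun_iff_map_prod_eq_prod_map_map hZmeas.aemeasurable hGmeas.aemeasurable).mp
        hindep,
      Measure.prod_apply hs]
    rfl
  have hGclamp : ∀ x : ℝ, (μ.map G) (Set.Iic x)
      = ENNReal.ofReal (1 - (1 - max 0 (min x 1)) ^ (N - 2)) := by
    intro x
    rw [Measure.map_apply hGmeas measurableSet_Iic]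
    exact cdf_clamp μ G hGrange (fun g => 1 - (1 - g) ^ (N - 2)) hGcdf
      (by norm_num)
      (by show (1:ℝ) - (1-1)^(N-2) = 1
          rw [sub_self, zero_pow (by omega : N - 2 ≠ 0), sub_zero]) x
  have hmapZ : μ.map Z = volume.withDensity (densZ N K) :=
    mapZ_eq μ N K hN hK Z hZmeas hZrange hZcdf
  set fint : ℝ → ℝ := fun z => if z ≤ v then (1:ℝ) else 1 - (1 - v / z) ^ (N - 2)
    with hfint
  have hfintmeas : Measurable fint := by
    refine Measurable.ite (measurableSet_le measurable_id measurable_const)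
      measurable_const ?_
    exact (((measurable_const.div measurable_id).const_sub 1).pow_const (N - 2)).const_sub 1
  have hfint01 : ∀ z ∈ Set.Ioc (0:ℝ) 1, 0 ≤ fint z ∧ fint z ≤ 1 := by
    intro z hz
    rw [hfint]
    by_cases hzv : z ≤ v
    · simp [hzv]
    · simp only [if_neg hzv]
      have hlt : v / z < 1 := (div_lt_one hz.1).mpr (not_le.mp hzv)
      have hge0 : 0 ≤ v / z := div_nonneg hv0 hz.1.le
      have hp0 : 0 ≤ (1 - v / z) ^ (N - 2) := pow_nonneg (by linarith) _
      have hp1 : (1 - v / z) ^ (N - 2) ≤ 1 := pow_le_one₀ (by linarith) (by linarith)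
      constructor <;> linarith
  have h2 : ∫⁻ z, (μ.map G) {g | z * g ≤ v} ∂(μ.map Z)
      = ∫⁻ z, Set.indicator (Set.Ioc (0:ℝ) 1)
          (fun z => ENNReal.ofReal (pZ N K z * fint z)) z := by
    have hmeasG : Measurable fun z : ℝ => (μ.map G) {g | z * g ≤ v} :=
      measurable_measure_prodMk_left (ν := Measure.map G μ) hs
    rw [hmapZ, lintegral_withDensity_eq_lintegral_mul volume (densZ_measurable N K) hmeasG]
    refine lintegral_congr fun z => ?_
    show densZ N K z * (μ.map G) {g | z * g ≤ v} = _
    by_cases hz : z ∈ Set.Ioc (0:ℝ) 1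
    · rw [densZ, Set.indicator_of_mem hz, Set.indicator_of_mem hz]
      have hset : {g : ℝ | z * g ≤ v} = Set.Iic (v / z) := by
        ext g
        simp only [Set.mem_setOf_eq, Set.mem_Iic]
        rw [mul_comm, ← le_div_iff₀ hz.1]
      rw [hset, hGclamp (v / z),
        ← ENNReal.ofReal_mul (pZ_nonneg N K hz.1.le hz.2 hN)]
      congr 1
      simp only [hfint]
      by_cases hzv : z ≤ v
      · have hge1 : (1:ℝ) ≤ v / z := (one_le_div hz.1).mpr hzv
        rw [min_eq_right hge1, max_eq_right zero_le_one, if_pos hzv, sub_self,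
          zero_pow (by omega : N - 2 ≠ 0), sub_zero]
      · have hlt : v / z < 1 := (div_lt_one hz.1).mpr (not_le.mp hzv)
        have hge0 : 0 ≤ v / z := div_nonneg hv0 hz.1.le
        rw [min_eq_left hlt.le, max_eq_right hge0, if_neg hzv]
    · rw [densZ, Set.indicator_of_notMem hz, Set.indicator_of_notMem hz, zero_mul]
  have hInt : IntegrableOn (fun z => pZ N K z * fint z) (Set.Ioc (0:ℝ) 1) volume := by
    refine Integrable.mono' ((pZ_continuous N K).abs.integrableOn_Ioc)
      (((pZ_continuous N K).measurable.mul hfintmeas).aestronglyMeasurable) ?_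
    refine (ae_restrict_iff' measurableSet_Ioc).mpr (ae_of_all _ fun z hz => ?_)
    obtain ⟨hf0, hf1⟩ := hfint01 z hz
    rw [Real.norm_eq_abs, abs_mul]
    calc |pZ N K z| * |fint z| ≤ |pZ N K z| * 1 := by
          apply mul_le_mul_of_nonneg_left _ (abs_nonneg _)
          rw [abs_le]; exact ⟨by linarith, hf1⟩
      _ = |pZ N K z| := mul_one _
  have hnn : 0 ≤ᵐ[volume.restrict (Set.Ioc (0:ℝ) 1)] fun z => pZ N K z * fint z := by
    refine (ae_restrict_iff' measurableSet_Ioc).mpr (ae_of_all _ fun z hz => ?_)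
    exact mul_nonneg (pZ_nonneg N K hz.1.le hz.2 hN) (hfint01 z hz).1
  have h3 : ∫⁻ z, Set.indicator (Set.Ioc (0:ℝ) 1)
        (fun z => ENNReal.ofReal (pZ N K z * fint z)) z
      = ENNReal.ofReal (∫ z in Set.Ioc (0:ℝ) 1, pZ N K z * fint z) := by
    rw [lintegral_indicator measurableSet_Ioc,
      ← ofReal_integral_eq_lintegral_ofReal hInt hnn]
  rw [h1, h2, h3, hfint, step3 N K hN hK v hv0 hv1]
end

section
/- For B ≥ 0 and N ≥ 2 integers, the random variable Z with CDF P_Z(z) = 1 − (1 − z^{N−1})^{2^B} on [0,1] has mean E[Z] = 2^B β(2^B, N/(N−1)), where β is the Euler beta function. -/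
open MeasureTheory

open intervalIntegral in
lemma intI (n : ℕ) (hn : 1 ≤ n) (K : ℕ) :
    ∫ t in (0:ℝ)..1, (1 - t^n)^K
      = ∏ j ∈ Finset.range K, (((j:ℝ)+1)*n)/(1+((j:ℝ)+1)*n) := by
  induction K with
  | zero => simp
  | succ K ih =>
    have hcont : ∀ m : ℕ, Continuous (fun t : ℝ => (1 - t^n)^m) := by
      intro m; fun_prop
    have hderiv : ∀ t : ℝ, HasDerivAt (fun t : ℝ => t * (1-t^n)^(K+1))
        ((1-t^n)^(K+1) - ((K:ℝ)+1)*n*(t^n)*(1-t^n)^K) t := by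
      intro t
      have h1 : HasDerivAt (fun t : ℝ => 1 - t^n) (-((n:ℝ) * t^(n-1))) t :=
        (hasDerivAt_pow n t).const_sub 1
      have h2 := h1.pow (K+1)
      have h3 : HasDerivAt (fun t : ℝ => t * (1-t^n)^(K+1))
          (1 * (1-t^n)^(K+1) + id t * (((K+1:ℕ):ℝ) * (1-t^n)^(K+1-1) * -((n:ℝ)*t^(n-1)))) t :=
        (hasDerivAt_id t).mul h2
      convert h3 using 1
      have ht : t * t^(n-1) = t^n := by
        rw [← pow_succ', Nat.sub_add_cancel hn]
      simp only [id_eq]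
      push_cast
      linear_combination (((K:ℝ)+1)) * (1-t^n)^K * n * ht
    have hftc := intervalIntegral.integral_eq_sub_of_hasDerivAt
      (f := fun t : ℝ => t * (1-t^n)^(K+1)) (a := 0) (b := 1)
      (fun t _ => hderiv t)
      (by
        apply Continuous.intervalIntegrable
        fun_prop)
    have hftc0 : ∫ t in (0:ℝ)..1, ((1-t^n)^(K+1) - ((K:ℝ)+1)*n*(t^n)*(1-t^n)^K) = 0 := by
      rw [hftc]; norm_num
    clear hftc
    -- hftc : ∫ t in 0..1, ((1-t^n)^(K+1) - (K+1)*n*t^n*(1-t^n)^K) = 1*0^(K+1) - 0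
    have hsplit : ∫ t in (0:ℝ)..1, ((1-t^n)^(K+1) - ((K:ℝ)+1)*n*(t^n)*(1-t^n)^K)
        = (∫ t in (0:ℝ)..1, (1-t^n)^(K+1))
          - ((K:ℝ)+1)*n * ((∫ t in (0:ℝ)..1, (1-t^n)^K) - ∫ t in (0:ℝ)..1, (1-t^n)^(K+1)) := by
      have e1 : ∀ t : ℝ, ((1-t^n)^(K+1) - ((K:ℝ)+1)*n*(t^n)*(1-t^n)^K)
          = (1-t^n)^(K+1) - ((K:ℝ)+1)*n*((1-t^n)^K - (1-t^n)^(K+1)) := by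
        intro t; ring
      simp_rw [e1]
      rw [intervalIntegral.integral_sub ((hcont _).intervalIntegrable _ _)
          (by apply Continuous.intervalIntegrable; fun_prop),
        intervalIntegral.integral_const_mul,
        intervalIntegral.integral_sub ((hcont _).intervalIntegrable _ _)
          ((hcont _).intervalIntegrable _ _)]
    rw [hsplit] at hftc0
    rw [Finset.prod_range_succ, ← ih]
    have hd : (0:ℝ) < 1 + ((K:ℝ)+1)*n := by positivity
    have : (1 + ((K:ℝ)+1)*n) * (∫ t in (0:ℝ)..1, (1-t^n)^(K+1))
        = ((K:ℝ)+1)*n * ∫ t in (0:ℝ)..1, (1-t^n)^K := by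
      linarith [hftc0]
    field_simp
    linarith [this]

lemma gammaProd (n : ℕ) (hn : 1 ≤ n) (K : ℕ) :
    (K.factorial : ℝ) * Real.Gamma (1 + 1/n) / Real.Gamma (1 + 1/n + K)
      = ∏ j ∈ Finset.range K, (((j:ℝ)+1)*n)/(1+((j:ℝ)+1)*n) := by
  have hnpos : (0:ℝ) < n := by exact_mod_cast hn
  induction K with
  | zero =>
    have : (0:ℝ) < Real.Gamma (1 + 1/n) := Real.Gamma_pos_of_pos (by positivity)
    simp only [Nat.cast_zero, add_zero, Nat.factorial_zero, Nat.cast_one, one_mul]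
    rw [div_self this.ne']
    simp
  | succ K ih =>
    have hcK : (0:ℝ) < 1 + 1/n + K := by positivity
    have hG : (0:ℝ) < Real.Gamma (1 + 1/n + K) := Real.Gamma_pos_of_pos hcK
    have hstep : Real.Gamma (1 + 1/(n:ℝ) + (K+1:ℕ)) = (1 + 1/n + K) * Real.Gamma (1 + 1/n + K) := by
      have := Real.Gamma_add_one (s := 1 + 1/(n:ℝ) + K) hcK.ne'
      rw [← this]; push_cast; ring_nf
    rw [Finset.prod_range_succ, ← ih, hstep]
    have hd : (0:ℝ) < 1 + ((K:ℝ)+1)*n := by positivity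
    have hfac : ((K+1).factorial : ℝ) = (K+1) * K.factorial := by
      push_cast [Nat.factorial_succ]; ring
    rw [hfac]
    have key : ((K:ℝ)+1) / (1 + 1/n + K) = (((K:ℝ)+1)*n)/(1+((K:ℝ)+1)*n) := by
      rw [div_eq_div_iff (by positivity : (0:ℝ) < 1 + 1/n + K).ne' hd.ne']
      field_simp
      ring
    field_simp
    rw [div_eq_div_iff (by positivity : (0:ℝ) < 1 + 1/n + K).ne' hd.ne'] at key
    nlinarith [key, hG, Real.Gamma_pos_of_pos (show (0:ℝ) < 1 + 1/n by positivity)]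

/-- Euler beta function via Gamma. -/
noncomputable def eulerBeta (x y : ℝ) : ℝ := Real.Gamma x * Real.Gamma y / Real.Gamma (x + y)

/-- If `Z` has CDF `P_Z(z) = 1 − (1 − z^(N−1))^(2^B)` on `[0,1]` (with `Z ∈ [0,1]` a.s.),
`B ≥ 0`, `N ≥ 2`, then `E[Z] = 2^B β(2^B, N/(N−1))`. -/
theorem stmt6 {Ω : Type*} [MeasurableSpace Ω] (μ : Measure Ω) [IsProbabilityMeasure μ]
    (N B : ℕ) (hN : 2 ≤ N) (Z : Ω → ℝ) (hZmeas : Measurable Z)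
    (hZrange : ∀ᵐ ω ∂μ, Z ω ∈ Set.Icc (0 : ℝ) 1)
    (hZcdf : ∀ z ∈ Set.Icc (0 : ℝ) 1,
      μ {ω | Z ω ≤ z} = ENNReal.ofReal (1 - (1 - z ^ (N - 1)) ^ (2 ^ B))) :
    ∫ ω, Z ω ∂μ = 2 ^ B * eulerBeta (2 ^ B) ((N : ℝ) / ((N : ℝ) - 1)) := by
  set n : ℕ := N - 1 with hn_def
  have hn : 1 ≤ n := by omega
  have hncast : (n:ℝ) = (N:ℝ) - 1 := by
    have : (N:ℝ) = ((n+1 : ℕ) : ℝ) := by norm_cast; omega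
    rw [this]; push_cast; ring
  have hnpos : (0:ℝ) < n := by exact_mod_cast hn
  set K : ℕ := 2 ^ B with hK_def
  have hK : 1 ≤ K := Nat.one_le_two_pow
  -- integrability
  have hint : Integrable Z μ := by
    apply Integrable.mono' (integrable_const (1:ℝ)) hZmeas.aestronglyMeasurable
    filter_upwards [hZrange] with ω h
    rw [Real.norm_eq_abs, abs_le]
    exact ⟨by linarith [h.1], h.2⟩
  have hnn : 0 ≤ᵐ[μ] Z := by filter_upwards [hZrange] with ω h using h.1
  have h1 := hint.integral_eq_integral_meas_lt hnn
  simp_rw [measureReal_def] at h1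
  have hgt1 : μ {ω | 1 < Z ω} = 0 := by
    have : ∀ᵐ ω ∂μ, ¬ (1 < Z ω) := by
      filter_upwards [hZrange] with ω h using not_lt.mpr h.2
    simpa [ae_iff] using this
  have hEq : Set.EqOn (fun t : ℝ => (μ {a | t < Z a}).toReal)
      (Set.indicator (Set.Ioc (0:ℝ) 1) (fun t => (1 - t^n)^K)) (Set.Ioi 0) := by
    intro t ht
    simp only [Set.mem_Ioi] at ht
    by_cases h1t : t ≤ 1
    · have htIcc : t ∈ Set.Icc (0:ℝ) 1 := ⟨le_of_lt ht, h1t⟩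
      have hset : {a | t < Z a} = {a | Z a ≤ t}ᶜ := by
        ext a; simp [not_le]
      have hle : t^n ≤ 1 := pow_le_one₀ ht.le h1t
      have htn0 : 0 ≤ t^n := by positivity
      have hy0 : 0 ≤ (1-t^n)^K := pow_nonneg (by linarith) K
      have hy1 : (1-t^n)^K ≤ 1 := pow_le_one₀ (by linarith) (by linarith)
      have hμ : μ {a | t < Z a} = ENNReal.ofReal ((1-t^n)^K) := by
        rw [hset, measure_compl (measurableSet_le hZmeas measurable_const) (measure_ne_top μ _),
          measure_univ, hZcdf t htIcc,
          ← ENNReal.ofReal_one, ← ENNReal.ofReal_sub _ (by linarith)]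
        norm_num
      simp only [hμ, ENNReal.toReal_ofReal hy0,
        Set.indicator_of_mem (Set.mem_Ioc.mpr ⟨ht, h1t⟩)]
    · have : μ {a | t < Z a} = 0 := by
        apply measure_mono_null _ hgt1
        intro a ha
        exact lt_trans (not_le.mp h1t) ha
      simp only [Set.indicator_apply, Set.mem_Ioc, this]
      rw [if_neg (by push_neg; intro _; linarith [not_le.mp h1t])]
      simp
  rw [h1, setIntegral_congr_fun measurableSet_Ioi hEq,
    integral_indicator measurableSet_Ioc,
    Measure.restrict_restrict measurableSet_Ioc,
    Set.inter_eq_left.mpr Set.Ioc_subset_Ioi_self,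
    ← intervalIntegral.integral_of_le zero_le_one, intI n hn K, ← gammaProd n hn K]
  -- now Gamma algebra
  have hc : (N:ℝ) / ((N:ℝ) - 1) = 1 + 1/(n:ℝ) := by
    rw [← hncast]; field_simp
    rw [hncast]; ring
  rw [eulerBeta, hc]
  have hKne : ((K:ℕ):ℝ) ≠ 0 := by positivity
  have hGadd : Real.Gamma ((K:ℝ) + 1) = K * Real.Gamma K := Real.Gamma_add_one hKne
  have hGfac : Real.Gamma ((K:ℝ) + 1) = K.factorial := by
    exact_mod_cast Real.Gamma_nat_eq_factorial K
  have harg : (K:ℝ) + (1 + 1/(n:ℝ)) = 1 + 1/(n:ℝ) + K := by ring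
  have h2B : ((2:ℝ)^B) = (K:ℝ) := by rw [hK_def]; push_cast; ring
  rw [h2B, harg]
  have hfacK : (K.factorial : ℝ) = K * Real.Gamma K := by rw [← hGfac, hGadd]
  rw [hfacK]; ring
end
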